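/- arXiv:1010.0205 — 4 statements merged into one kernel-verified Lean document; each statement's English description precedes it below -/
import Mathlib

section
/- Let V be an n-dimensional vector space over a field F with |F| ≥ 4, with basis a_1, ..., a_n, and let 1 ≤ k ≤ n. Any nonzero SL(V)-invariant subspace U of the k-th exterior power Λ^k V equals Λ^k V; that is, Λ^k V is an irreducible SL(V)-module. -/
open ExteriorAlgebra

namespace ExtPowIrred

variable {F V : Type*} [Field F] [AddCommGroup V] [Module F V] {n k : ℕ}

/-- The wedge monomial associated to a `k`-element subset of `Fin n`. -/
noncomputable def wedge (b : Module.Basis (Fin n) F V) (s : {s : Finset (Fin n) // s.card = k}) :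
    ExteriorAlgebra F V :=
  ExteriorAlgebra.ιMulti F k (fun i => b ((s.1.orderIsoOfFin s.2 i : Fin n)))

lemma wedge_mem (b : Module.Basis (Fin n) F V) (s : {s : Finset (Fin n) // s.card = k}) :
    wedge b s ∈ ⋀[F]^k V :=
  ExteriorAlgebra.ιMulti_range F k (Set.mem_range_self _)

/-- The coordinate projection onto the coordinates in `s`. -/
noncomputable def coordMap (b : Module.Basis (Fin n) F V) (s : {s : Finset (Fin n) // s.card = k}) :
    V →ₗ[F] (Fin k → F) :=
  LinearMap.pi fun j => b.coord ((s.1.orderIsoOfFin s.2 j : Fin n))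

/-- The alternating form computing the determinant of `s`-coordinates of `k` vectors. -/
noncomputable def detMap (b : Module.Basis (Fin n) F V) (s : {s : Finset (Fin n) // s.card = k}) :
    V [⋀^Fin k]→ₗ[F] F :=
  (Matrix.detRowAlternating : (Fin k → F) [⋀^Fin k]→ₗ[F] F).compLinearMap (coordMap b s)

/-- Dual functional to the wedge monomials. -/
noncomputable def phi (b : Module.Basis (Fin n) F V) (s : {s : Finset (Fin n) // s.card = k}) :
    ExteriorAlgebra F V →ₗ[F] F :=
  ExteriorAlgebra.liftAlternating (Function.update (fun _ => 0) k (detMap b s))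

lemma phi_wedge (b : Module.Basis (Fin n) F V) (s t : {s : Finset (Fin n) // s.card = k}) :
    phi b s (wedge b t) = if t = s then 1 else 0 := by
  classical
  unfold phi wedge
  rw [ExteriorAlgebra.liftAlternating_apply_ιMulti, Function.update_self]
  unfold detMap
  rw [AlternatingMap.compLinearMap_apply]
  have hM : (Matrix.detRowAlternating
      (fun i => (coordMap b s) (b ((t.1.orderIsoOfFin t.2 i : Fin n))))) =
      Matrix.det (Matrix.of fun i j =>
        if (t.1.orderIsoOfFin t.2 i : Fin n) = (s.1.orderIsoOfFin s.2 j : Fin n)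
          then (1:F) else 0) := by
    congr 1
    funext i j
    simp [coordMap, Module.Basis.coord_apply, Module.Basis.repr_self, Finsupp.single_apply]
    congr
  rw [hM]
  by_cases hts : t = s
  · subst hts
    rw [if_pos rfl]
    have : (Matrix.of fun i j =>
        if (t.1.orderIsoOfFin t.2 i : Fin n) = (t.1.orderIsoOfFin t.2 j : Fin n)
          then (1:F) else 0) = 1 := by
      ext i j
      rw [Matrix.of_apply, Matrix.one_apply]
      congr 1
      simp [Subtype.ext_iff.symm]
    rw [this, Matrix.det_one]
  · rw [if_neg hts]
    have hsub : ¬ t.1 ⊆ s.1 := by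
      intro h
      exact hts (Subtype.ext (Finset.eq_of_subset_of_card_le h (by rw [s.2, t.2])))
    obtain ⟨x, hxt, hxs⟩ := Finset.not_subset.mp hsub
    set i0 := (t.1.orderIsoOfFin t.2).symm ⟨x, hxt⟩
    apply Matrix.det_eq_zero_of_row_eq_zero i0
    intro j
    rw [Matrix.of_apply, if_neg]
    intro h
    apply hxs
    have : (t.1.orderIsoOfFin t.2 i0 : Fin n) = x := by
      simp [i0]
    rw [this] at h
    rw [h]
    exact (s.1.orderIsoOfFin s.2 j).2

lemma linearIndependent_wedge (b : Module.Basis (Fin n) F V) :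
    LinearIndependent F (wedge (k := k) b) := by
  classical
  rw [linearIndependent_iff']
  intro S g hsum s hs
  have := congrArg (phi b s) hsum
  rw [map_sum, map_zero] at this
  simp_rw [map_smul, phi_wedge, smul_eq_mul, mul_ite, mul_one, mul_zero] at this
  rw [Finset.sum_ite_eq' S s (fun t => g t), if_pos hs] at this
  exact this

lemma wedge_of_injective (b : Module.Basis (Fin n) F V) (r : Fin k → Fin n)
    (hr : Function.Injective r) :
    ∃ ε : F, (ε = 1 ∨ ε = -1) ∧ ExteriorAlgebra.ιMulti F k (fun i => b (r i)) =
      ε • wedge b ⟨Finset.univ.image r, by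
        rw [Finset.card_image_of_injective _ hr, Finset.card_univ, Fintype.card_fin]⟩ := by
  classical
  set s : {s : Finset (Fin n) // s.card = k} := ⟨Finset.univ.image r, by
        rw [Finset.card_image_of_injective _ hr, Finset.card_univ, Fintype.card_fin]⟩ with hs
  have hrange : Set.range r = ↑s.1 := by
    simp [hs, Finset.coe_image]
  set e := s.1.orderIsoOfFin s.2 with he
  set σ : Equiv.Perm (Fin k) :=
    (Equiv.ofInjective r hr).trans ((Equiv.setCongr hrange).trans e.toEquiv.symm) with hσ
  have hcomp : (fun i => b ((e i : Fin n))) ∘ σ = fun i => b (r i) := by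
    funext p
    simp [hσ, Function.comp, Equiv.setCongr]
    rfl
  refine ⟨((Equiv.Perm.sign σ : ℤ) : F), ?_, ?_⟩
  · rcases Int.units_eq_one_or (Equiv.Perm.sign σ) with h | h <;> rw [h] <;> simp
  · have := AlternatingMap.map_perm (g := ExteriorAlgebra.ιMulti F k)
      (fun i => b ((e i : Fin n))) σ
    rw [hcomp] at this
    rw [this, wedge]
    rw [Units.smul_def, Int.cast_smul_eq_zsmul]

lemma ιMulti_mem_span (b : Module.Basis (Fin n) F V) (r : Fin k → Fin n) :
    ExteriorAlgebra.ιMulti F k (fun i => b (r i)) ∈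
      Submodule.span F (Set.range (wedge (k := k) b)) := by
  by_cases hr : Function.Injective r
  · obtain ⟨ε, -, h⟩ := wedge_of_injective b r hr
    rw [h]
    exact Submodule.smul_mem _ _ (Submodule.subset_span (Set.mem_range_self _))
  · rw [AlternatingMap.map_eq_zero_of_not_injective _ _
      (fun h => hr (fun p q hpq => h (by simp [hpq])))]
    exact Submodule.zero_mem _

lemma span_wedge (b : Module.Basis (Fin n) F V) :
    Submodule.span F (Set.range (wedge (k := k) b)) = ⋀[F]^k V := by
  classical
  apply le_antisymm
  · rw [Submodule.span_le]
    rintro _ ⟨s, rfl⟩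
    exact wedge_mem b s
  · rw [← ExteriorAlgebra.ιMulti_span_fixedDegree, Submodule.span_le]
    rintro _ ⟨v, rfl⟩
    have hv : v = fun i => ∑ j : Fin n, b.repr (v i) j • b j := by
      funext i
      exact (b.sum_repr (v i)).symm
    rw [hv]
    have hexp := MultilinearMap.map_sum (ExteriorAlgebra.ιMulti F k (M := V)).toMultilinearMap
      (g := fun i j => b.repr (v i) j • b j)
    rw [AlternatingMap.coe_multilinearMap] at hexp
    rw [hexp]
    apply Submodule.sum_mem
    intro r _
    have : (ExteriorAlgebra.ιMulti F k fun i => b.repr (v i) (r i) • b (r i)) =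
        (∏ i, b.repr (v i) (r i)) • ExteriorAlgebra.ιMulti F k fun i => b (r i) := by
      exact MultilinearMap.map_smul_univ _ _ _
    rw [this]
    exact Submodule.smul_mem _ _ (ιMulti_mem_span b r)

/-! ### Elements of `SL(V)` -/

/-- The transvection sending `b i ↦ b i + b j` and fixing other basis vectors. -/
noncomputable def tv (b : Module.Basis (Fin n) F V) (i j : Fin n) (hij : i ≠ j) : V ≃ₗ[F] V :=
  Matrix.toLinearEquiv b (Matrix.transvection j i (1 : F))
    (by rw [Matrix.det_transvection_of_ne j i (Ne.symm hij)]; exact isUnit_one)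

lemma tv_det (b : Module.Basis (Fin n) F V) (i j : Fin n) (hij : i ≠ j) :
    LinearMap.det ((tv b i j hij : V ≃ₗ[F] V) : V →ₗ[F] V) = 1 := by
  have h1 : ((tv b i j hij : V ≃ₗ[F] V) : V →ₗ[F] V) =
      Matrix.toLin b b (Matrix.transvection j i (1 : F)) := by
    ext x
    rfl
  rw [h1, LinearMap.det_toLin, Matrix.det_transvection_of_ne j i (Ne.symm hij)]

lemma tv_apply (b : Module.Basis (Fin n) F V) (i j : Fin n) (hij : i ≠ j) (m : Fin n) :
    tv b i j hij (b m) = b m + if m = i then b j else 0 := by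
  classical
  show Matrix.toLin b b (Matrix.transvection j i (1 : F)) (b m) = _
  rw [Matrix.toLin_self]
  simp only [Matrix.transvection, Matrix.add_apply, Matrix.one_apply,
    Matrix.single, Matrix.smul_apply, Matrix.of_apply, smul_eq_mul, mul_ite, mul_one,
    mul_zero, add_smul, ite_smul, one_smul, zero_smul, Finset.sum_add_distrib]
  rw [Finset.sum_ite_eq' Finset.univ m (fun p => b p)]
  simp only [Finset.mem_univ, if_true]
  congr 1
  by_cases him : i = m
  · simp [him, eq_comm]
  · rw [if_neg (fun h : m = i => him h.symm)]
    simp [him]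

noncomputable def swapMat (i j : Fin n) : Matrix (Fin n) (Fin n) F :=
  (Equiv.swap i j).permMatrix F * Matrix.diagonal (fun m => if m = i then (-1:F) else 1)

lemma swapMat_det (i j : Fin n) (hij : i ≠ j) : (swapMat (F := F) i j).det = 1 := by
  rw [swapMat, Matrix.det_mul, Matrix.det_permutation, Matrix.det_diagonal,
    Equiv.Perm.sign_swap hij]
  rw [Finset.prod_ite_eq' Finset.univ i (fun _ => (-1:F))]
  simp

/-- The signed swap `b i ↦ -b j`, `b j ↦ b i`. -/
noncomputable def sw (b : Module.Basis (Fin n) F V) (i j : Fin n) (hij : i ≠ j) : V ≃ₗ[F] V :=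
  Matrix.toLinearEquiv b (swapMat i j) (by rw [swapMat_det i j hij]; exact isUnit_one)

lemma sw_det (b : Module.Basis (Fin n) F V) (i j : Fin n) (hij : i ≠ j) :
    LinearMap.det ((sw b i j hij : V ≃ₗ[F] V) : V →ₗ[F] V) = 1 := by
  have h1 : ((sw b i j hij : V ≃ₗ[F] V) : V →ₗ[F] V) = Matrix.toLin b b (swapMat i j) := by
    ext x; rfl
  rw [h1, LinearMap.det_toLin, swapMat_det i j hij]

lemma sw_apply (b : Module.Basis (Fin n) F V) (i j : Fin n) (hij : i ≠ j) (m : Fin n) :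
    sw b i j hij (b m) = (if m = i then (-1:F) else 1) • b (Equiv.swap i j m) := by
  classical
  show Matrix.toLin b b (swapMat i j) (b m) = _
  rw [Matrix.toLin_self]
  have hA : ∀ p, (swapMat (F := F) i j p m) • b p =
      (if p = Equiv.swap i j m then ((if m = i then (-1:F) else 1) • b p) else 0) := by
    intro p
    rw [swapMat, Matrix.mul_diagonal]
    by_cases h : p = Equiv.swap i j m
    · subst h
      have hswap : Equiv.swap i j (Equiv.swap i j m) = m := Equiv.swap_apply_self i j m
      simp [PEquiv.toMatrix_apply, Equiv.toPEquiv_apply, hswap]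
    · have hne : Equiv.swap i j p ≠ m := by
        intro hh
        exact h (by rw [← hh, Equiv.swap_apply_self])
      rw [if_neg h]
      simp [PEquiv.toMatrix_apply, Equiv.toPEquiv_apply, hne]
  simp_rw [hA]
  rw [Finset.sum_ite_eq' Finset.univ (Equiv.swap i j m)
    (fun p => (if m = i then (-1:F) else 1) • b p)]
  simp

/-! ### Moving between subsets -/

def moveS (i j : Fin n) (s : Finset (Fin n)) : Finset (Fin n) := insert j (s.erase i)

lemma moveS_card {i j : Fin n} {s : Finset (Fin n)} (hi : i ∈ s) (hj : j ∉ s)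
    (h : s.card = k) : (moveS i j s).card = k := by
  rw [moveS, Finset.card_insert_of_notMem (fun hmem => hj (Finset.mem_of_mem_erase hmem)),
    Finset.card_erase_of_mem hi, h]
  have : 0 < k := by
    rw [← h]
    exact Finset.card_pos.mpr ⟨i, hi⟩
  omega

lemma moveS_inj {i j : Fin n} {s t : Finset (Fin n)} (his : i ∈ s) (hjs : j ∉ s)
    (hit : i ∈ t) (hjt : j ∉ t) (h : moveS i j s = moveS i j t) : s = t := by
  have h2 := congrArg (Finset.erase · j) h
  simp only [moveS] at h2
  rw [Finset.erase_insert (fun hmem => hjs (Finset.mem_of_mem_erase hmem)),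
    Finset.erase_insert (fun hmem => hjt (Finset.mem_of_mem_erase hmem))] at h2
  have h3 := congrArg (insert i) h2
  rwa [Finset.insert_erase his, Finset.insert_erase hit] at h3

lemma orderIso_injective (s : {s : Finset (Fin n) // s.card = k}) :
    Function.Injective (fun p => ((s.1.orderIsoOfFin s.2 p : Fin n))) := by
  intro p q h
  exact (s.1.orderIsoOfFin s.2).injective (Subtype.ext h)

lemma update_injective (i j : Fin n) (s : {s : Finset (Fin n) // s.card = k})
    (hi : i ∈ s.1) (hj : j ∉ s.1) :
    Function.Injective (Function.update
      (fun q => ((s.1.orderIsoOfFin s.2 q : Fin n))) ((s.1.orderIsoOfFin s.2).symm ⟨i, hi⟩) j) := by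
  classical
  set e := s.1.orderIsoOfFin s.2
  set p0 := e.symm ⟨i, hi⟩
  intro p q h
  by_cases hp : p = p0 <;> by_cases hq : q = p0
  · rw [hp, hq]
  · rw [hp, Function.update_self, Function.update_of_ne hq] at h
    exact absurd (h ▸ (e q).2) hj
  · rw [hq, Function.update_self, Function.update_of_ne hp] at h
    exact absurd (h.symm ▸ (e p).2) hj
  · rw [Function.update_of_ne hp, Function.update_of_ne hq] at h
    exact orderIso_injective s h

lemma update_image (i j : Fin n) (s : {s : Finset (Fin n) // s.card = k})
    (hi : i ∈ s.1) (hj : j ∉ s.1) :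
    Finset.univ.image (Function.update
      (fun q => ((s.1.orderIsoOfFin s.2 q : Fin n))) ((s.1.orderIsoOfFin s.2).symm ⟨i, hi⟩) j)
    = moveS i j s.1 := by
  classical
  set e := s.1.orderIsoOfFin s.2 with he
  set p0 := e.symm ⟨i, hi⟩ with hp0
  ext x
  simp only [Finset.mem_image, Finset.mem_univ, true_and, moveS, Finset.mem_insert,
    Finset.mem_erase]
  constructor
  · rintro ⟨p, rfl⟩
    by_cases hp : p = p0
    · subst hp
      left
      rw [Function.update_self]
    · rw [Function.update_of_ne hp]
      right
      refine ⟨?_, (e p).2⟩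
      intro hx
      apply hp
      apply e.injective
      rw [Subtype.ext_iff]
      show (e p : Fin n) = (e p0 : Fin n)
      rw [hx, hp0, OrderIso.apply_symm_apply]
  · rintro (rfl | ⟨hxi, hxs⟩)
    · exact ⟨p0, Function.update_self _ _ _⟩
    · refine ⟨e.symm ⟨x, hxs⟩, ?_⟩
      rw [Function.update_of_ne, OrderIso.apply_symm_apply]
      intro hh
      apply hxi
      have h2 := congrArg (fun z => ((e z : {y // y ∈ s.1}) : Fin n)) hh
      simp only [OrderIso.apply_symm_apply] at h2
      rw [h2, hp0, OrderIso.apply_symm_apply]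

lemma wedge_move (b : Module.Basis (Fin n) F V) (i j : Fin n) (s : {s : Finset (Fin n) // s.card = k})
    (hi : i ∈ s.1) (hj : j ∉ s.1) :
    ∃ ε : F, (ε = 1 ∨ ε = -1) ∧
      ExteriorAlgebra.ιMulti F k (fun p => b (Function.update
        (fun q => ((s.1.orderIsoOfFin s.2 q : Fin n)))
        ((s.1.orderIsoOfFin s.2).symm ⟨i, hi⟩) j p))
      = ε • wedge b ⟨moveS i j s.1, moveS_card hi hj s.2⟩ := by
  obtain ⟨ε, hε, h⟩ := wedge_of_injective b _ (update_injective i j s hi hj)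
  refine ⟨ε, hε, ?_⟩
  rw [h]
  apply congrArg
  apply congrArg
  exact Subtype.ext (update_image i j s hi hj)

/-! ### Action of the transvections and swaps on wedge monomials -/

lemma map_wedge (b : Module.Basis (Fin n) F V) (f : V ≃ₗ[F] V)
    (s : {s : Finset (Fin n) // s.card = k}) :
    ExteriorAlgebra.map (f : V →ₗ[F] V) (wedge b s) =
      ExteriorAlgebra.ιMulti F k (fun p => f (b ((s.1.orderIsoOfFin s.2 p : Fin n)))) := by
  rw [wedge, ExteriorAlgebra.map_apply_ιMulti]
  rfl

section cases
variable (b : Module.Basis (Fin n) F V) (i j : Fin n) (hij : i ≠ j)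
  (s : {s : Finset (Fin n) // s.card = k})

lemma map_tv_wedge_of_not_mem (hi : i ∉ s.1) :
    ExteriorAlgebra.map ((tv b i j hij : V ≃ₗ[F] V) : V →ₗ[F] V) (wedge b s) = wedge b s := by
  rw [map_wedge, wedge]
  congr 1
  funext p
  rw [tv_apply, if_neg, add_zero]
  intro h
  exact hi (h ▸ (s.1.orderIsoOfFin s.2 p).2)

lemma map_tv_wedge_of_mem_mem (hi : i ∈ s.1) (hj : j ∈ s.1) :
    ExteriorAlgebra.map ((tv b i j hij : V ≃ₗ[F] V) : V →ₗ[F] V) (wedge b s) = wedge b s := by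
  classical
  rw [map_wedge]
  set e := s.1.orderIsoOfFin s.2 with he
  set p0 := e.symm ⟨i, hi⟩ with hp0
  have hep0 : (e p0 : Fin n) = i := by rw [hp0, OrderIso.apply_symm_apply]
  have htuple : (fun p => tv b i j hij (b ((e p : Fin n)))) =
      Function.update (fun p => b ((e p : Fin n))) p0 (b i + b j) := by
    funext p
    by_cases hp : p = p0
    · subst hp
      rw [Function.update_self, tv_apply, hep0, if_pos rfl]
    · rw [Function.update_of_ne hp, tv_apply, if_neg, add_zero]
      intro h
      exact hp (e.injective (Subtype.ext (h.trans hep0.symm)))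
  rw [htuple, AlternatingMap.map_update_add]
  have h1 : Function.update (fun p => b ((e p : Fin n))) p0 (b i) =
      (fun p => b ((e p : Fin n))) := by
    rw [← hep0]
    exact Function.update_eq_self _ _
  have h2 : (ExteriorAlgebra.ιMulti F k) (Function.update (fun p => b ((e p : Fin n))) p0 (b j))
      = 0 := by
    set q0 := e.symm ⟨j, hj⟩ with hq0
    have heq0 : (e q0 : Fin n) = j := by rw [hq0, OrderIso.apply_symm_apply]
    have hpq : q0 ≠ p0 := by
      intro h
      apply hij
      rw [← hep0, ← heq0, h]
    apply AlternatingMap.map_eq_zero_of_eq _ _ (i := p0) (j := q0) _ (Ne.symm hpq)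
    rw [Function.update_self, Function.update_of_ne hpq, heq0]
  rw [h1, h2, add_zero, wedge]

lemma map_tv_wedge_of_mem_not_mem (hi : i ∈ s.1) (hj : j ∉ s.1) :
    ∃ ε : F, (ε = 1 ∨ ε = -1) ∧
    ExteriorAlgebra.map ((tv b i j hij : V ≃ₗ[F] V) : V →ₗ[F] V) (wedge b s) =
      wedge b s + ε • wedge b ⟨moveS i j s.1, moveS_card hi hj s.2⟩ := by
  classical
  obtain ⟨ε, hε, hmove⟩ := wedge_move b i j s hi hj
  refine ⟨ε, hε, ?_⟩
  rw [map_wedge]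
  set e := s.1.orderIsoOfFin s.2 with he
  set p0 := e.symm ⟨i, hi⟩ with hp0
  have hep0 : (e p0 : Fin n) = i := by rw [hp0, OrderIso.apply_symm_apply]
  have htuple : (fun p => tv b i j hij (b ((e p : Fin n)))) =
      Function.update (fun p => b ((e p : Fin n))) p0 (b i + b j) := by
    funext p
    by_cases hp : p = p0
    · subst hp
      rw [Function.update_self, tv_apply, hep0, if_pos rfl]
    · rw [Function.update_of_ne hp, tv_apply, if_neg, add_zero]
      intro h
      exact hp (e.injective (Subtype.ext (h.trans hep0.symm)))
  rw [htuple, AlternatingMap.map_update_add]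
  have h1 : Function.update (fun p => b ((e p : Fin n))) p0 (b i) =
      (fun p => b ((e p : Fin n))) := by
    rw [← hep0]
    exact Function.update_eq_self _ _
  have h2 : Function.update (fun p => b ((e p : Fin n))) p0 (b j) =
      (fun p => b (Function.update (fun q => ((e q : Fin n))) p0 j p)) := by
    funext p
    by_cases hp : p = p0
    · subst hp
      rw [Function.update_self, Function.update_self]
    · rw [Function.update_of_ne hp, Function.update_of_ne hp]
  rw [h1, h2, hmove]
  rfl

lemma map_sw_wedge (hi : i ∈ s.1) (hj : j ∉ s.1) :
    ∃ ε : F, (ε = 1 ∨ ε = -1) ∧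
    ExteriorAlgebra.map ((sw b i j hij : V ≃ₗ[F] V) : V →ₗ[F] V) (wedge b s) =
      ε • wedge b ⟨moveS i j s.1, moveS_card hi hj s.2⟩ := by
  classical
  obtain ⟨ε, hε, hmove⟩ := wedge_move b i j s hi hj
  refine ⟨-ε, by rcases hε with h | h <;> rw [h] <;> simp, ?_⟩
  rw [map_wedge]
  set e := s.1.orderIsoOfFin s.2 with he
  set p0 := e.symm ⟨i, hi⟩ with hp0
  have hep0 : (e p0 : Fin n) = i := by rw [hp0, OrderIso.apply_symm_apply]
  have htuple : (fun p => sw b i j hij (b ((e p : Fin n)))) =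
      (fun p => (if (e p : Fin n) = i then (-1:F) else 1) •
        b (Function.update (fun q => ((e q : Fin n))) p0 j p)) := by
    funext p
    rw [sw_apply]
    congr 2
    by_cases hp : p = p0
    · subst hp
      rw [hep0, Function.update_self, Equiv.swap_apply_left]
    · rw [Function.update_of_ne hp]
      apply Equiv.swap_apply_of_ne_of_ne
      · intro h
        exact hp (e.injective (Subtype.ext (h.trans hep0.symm)))
      · intro h
        exact hj (h ▸ (e p).2)
  rw [htuple]
  have hsm := MultilinearMap.map_smul_univ
    (ExteriorAlgebra.ιMulti F k (M := V)).toMultilinearMap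
    (fun p => if (e p : Fin n) = i then (-1:F) else 1)
    (fun p => b (Function.update (fun q => ((e q : Fin n))) p0 j p))
  rw [AlternatingMap.coe_multilinearMap] at hsm
  rw [hsm]
  have hprod : (∏ p, if (e p : Fin n) = i then (-1:F) else 1) = -1 := by
    have : ∀ p, ((e p : Fin n) = i) = (p = p0) := by
      intro p
      rw [eq_iff_iff]
      constructor
      · intro h
        exact e.injective (Subtype.ext (h.trans hep0.symm))
      · rintro rfl
        exact hep0
    simp_rw [this]
    rw [Finset.prod_ite_eq' Finset.univ p0 (fun _ => (-1:F))]
    simp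
  rw [hprod, hmove, smul_smul]
  ring_nf
end cases

end ExtPowIrred

open ExtPowIrred in
/-- If `V` is an `n`-dimensional vector space over a field `F` with at least `4` elements
and `1 ≤ k ≤ n`, then any nonzero `SL(V)`-invariant subspace of the `k`-th exterior
power `⋀^k V` is all of `⋀^k V`: the exterior power is an irreducible `SL(V)`-module. -/
theorem exteriorPower_sl_irreducible
    {F V : Type*} [Field F] [AddCommGroup V] [Module F V]
    (hF : 4 ≤ Cardinal.mk F)
    (n : ℕ) (b : Module.Basis (Fin n) F V)
    (k : ℕ) (hk1 : 1 ≤ k) (hkn : k ≤ n)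
    (U : Submodule F (ExteriorAlgebra F V))
    (hUle : U ≤ ⋀[F]^k V) (hU0 : U ≠ ⊥)
    (hinv : ∀ g : V ≃ₗ[F] V, LinearMap.det (g : V →ₗ[F] V) = 1 →
      ∀ x ∈ U, ExteriorAlgebra.map (g : V →ₗ[F] V) x ∈ U) :
    U = ⋀[F]^k V := by
  classical
  have hspan := span_wedge (k := k) b
  -- Step 1: some wedge monomial lies in `U`.
  have step1 : ∃ s : {s : Finset (Fin n) // s.card = k}, wedge b s ∈ U := by
    obtain ⟨u, huU, hu0⟩ := Submodule.exists_mem_ne_zero_of_ne_bot hU0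
    have humem : u ∈ Submodule.span F (Set.range (wedge (k := k) b)) := by
      rw [hspan]; exact hUle huU
    rw [Submodule.mem_span_range_iff_exists_fun] at humem
    obtain ⟨c, hc⟩ := humem
    suffices H : ∀ N : ℕ, ∀ c : {s : Finset (Fin n) // s.card = k} → F,
        (∑ s, c s • wedge b s) ∈ U → (∑ s, c s • wedge b s) ≠ 0 →
        (Finset.univ.filter (fun s => c s ≠ 0)).card ≤ N →
        ∃ s, wedge b s ∈ U by
      exact H _ c (hc ▸ huU) (hc ▸ hu0) le_rfl
    intro N
    induction N with
    | zero =>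
      intro c hcU hc0 hcard
      exfalso
      apply hc0
      have hall : ∀ s, c s = 0 := by
        intro s
        by_contra h
        have hmem : s ∈ Finset.univ.filter (fun s => c s ≠ 0) :=
          Finset.mem_filter.mpr ⟨Finset.mem_univ _, h⟩
        rw [Finset.card_eq_zero.mp (Nat.le_zero.mp hcard)] at hmem
        exact absurd hmem (Finset.notMem_empty _)
      simp [hall]
    | succ N ih =>
      intro c hcU hc0 hcard
      by_cases hN : (Finset.univ.filter (fun s => c s ≠ 0)).card ≤ N
      · exact ih c hcU hc0 hN
      have hcard' : (Finset.univ.filter (fun s => c s ≠ 0)).card = N + 1 :=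
        le_antisymm hcard (Nat.succ_le_of_lt (not_le.mp hN))
      by_cases hone : (Finset.univ.filter (fun s => c s ≠ 0)).card = 1
      · -- a single monomial: done
        obtain ⟨s0, hs0⟩ := Finset.card_eq_one.mp hone
        have hcs0 : c s0 ≠ 0 := by
          have hm : s0 ∈ Finset.univ.filter (fun s => c s ≠ 0) := by
            rw [hs0]; exact Finset.mem_singleton_self s0
          exact (Finset.mem_filter.mp hm).2
        have hsum : (∑ s, c s • wedge b s) = c s0 • wedge b s0 := by
          refine Finset.sum_eq_single s0 (fun t _ hts => ?_)
            (fun h => absurd (Finset.mem_univ s0) h)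
          have hct : c t = 0 := by
            by_contra h
            have hm : t ∈ Finset.univ.filter (fun s => c s ≠ 0) :=
              Finset.mem_filter.mpr ⟨Finset.mem_univ _, h⟩
            rw [hs0] at hm
            exact hts (Finset.mem_singleton.mp hm)
          rw [hct, zero_smul]
        refine ⟨s0, ?_⟩
        have hmem := Submodule.smul_mem U (c s0)⁻¹ hcU
        rw [hsum, smul_smul, inv_mul_cancel₀ hcs0, one_smul] at hmem
        exact hmem
      · -- at least two monomials: use a transvection to shorten the support
        have h2 : 1 < (Finset.univ.filter (fun s => c s ≠ 0)).card := by omega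
        obtain ⟨s, hs, t, ht, hst⟩ := Finset.one_lt_card.mp h2
        have hcs : c s ≠ 0 := (Finset.mem_filter.mp hs).2
        have hct : c t ≠ 0 := (Finset.mem_filter.mp ht).2
        have hst1 : s.1 ≠ t.1 := fun h => hst (Subtype.ext h)
        have hsub1 : ¬ s.1 ⊆ t.1 := fun h =>
          hst1 (Finset.eq_of_subset_of_card_le h (by rw [t.2, s.2]))
        have hsub2 : ¬ t.1 ⊆ s.1 := fun h =>
          hst1 (Finset.eq_of_subset_of_card_le h (by rw [t.2, s.2])).symm
        obtain ⟨i, his, hit⟩ := Finset.not_subset.mp hsub1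
        obtain ⟨j, hjt, hjs⟩ := Finset.not_subset.mp hsub2
        have hij : i ≠ j := fun h => hjs (h ▸ his)
        set g := tv b i j hij with hg
        have hgU : ExteriorAlgebra.map ((g : V ≃ₗ[F] V) : V →ₗ[F] V) (∑ s, c s • wedge b s)
            ∈ U := hinv g (tv_det b i j hij) _ hcU
        have hsubU : (ExteriorAlgebra.map ((g : V ≃ₗ[F] V) : V →ₗ[F] V)
            (∑ s, c s • wedge b s)) - (∑ s, c s • wedge b s) ∈ U := sub_mem hgU hcU
        -- the moved subsets
        set mvI : {s : Finset (Fin n) // s.card = k} → {s : Finset (Fin n) // s.card = k} :=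
          fun s' => if h : i ∈ s'.1 ∧ j ∉ s'.1 then ⟨moveS i j s'.1, moveS_card h.1 h.2 s'.2⟩
            else s' with hmvI
        have key : ∀ s' : {s : Finset (Fin n) // s.card = k}, ∃ ε : F, (ε = 1 ∨ ε = -1) ∧
            ExteriorAlgebra.map ((g : V ≃ₗ[F] V) : V →ₗ[F] V) (wedge b s') - wedge b s' =
              (if i ∈ s'.1 ∧ j ∉ s'.1 then ε else 0) • wedge b (mvI s') := by
          intro s'
          by_cases h : i ∈ s'.1 ∧ j ∉ s'.1
          · obtain ⟨ε, hε, heq⟩ := map_tv_wedge_of_mem_not_mem b i j hij s' h.1 h.2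
            refine ⟨ε, hε, ?_⟩
            rw [heq, if_pos h, hmvI]
            simp only [dif_pos h]
            abel
          · refine ⟨1, Or.inl rfl, ?_⟩
            rw [if_neg h, zero_smul]
            by_cases hi' : i ∈ s'.1
            · have hj' : j ∈ s'.1 := by
                by_contra hj'
                exact h ⟨hi', hj'⟩
              rw [map_tv_wedge_of_mem_mem b i j hij s' hi' hj', sub_self]
            · rw [map_tv_wedge_of_not_mem b i j hij s' hi', sub_self]
        choose ε hε1 hε2 using key
        set d : {s : Finset (Fin n) // s.card = k} → F :=
          fun s' => c s' * (if i ∈ s'.1 ∧ j ∉ s'.1 then ε s' else 0) with hd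
        have hu'' : (ExteriorAlgebra.map ((g : V ≃ₗ[F] V) : V →ₗ[F] V)
            (∑ s, c s • wedge b s)) - (∑ s, c s • wedge b s) =
            ∑ s', d s' • wedge b (mvI s') := by
          rw [map_sum, ← Finset.sum_sub_distrib]
          refine Finset.sum_congr rfl (fun s' _ => ?_)
          rw [map_smul, ← smul_sub, hε2 s', smul_smul]
        set Q := Finset.univ.filter (fun s' => d s' ≠ 0) with hQ
        have hQprop : ∀ s' ∈ Q, c s' ≠ 0 ∧ (i ∈ s'.1 ∧ j ∉ s'.1) := by
          intro s' hs'
          have hd' : d s' ≠ 0 := (Finset.mem_filter.mp hs').2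
          constructor
          · intro h0
            exact hd' (by rw [hd]; simp [h0])
          · by_contra h0
            exact hd' (by rw [hd]; simp only [if_neg h0, mul_zero])
        have hsQ : s ∈ Q := by
          refine Finset.mem_filter.mpr ⟨Finset.mem_univ _, ?_⟩
          rw [hd]
          simp only [if_pos (⟨his, hjs⟩ : i ∈ s.1 ∧ j ∉ s.1)]
          have hεne : ε s ≠ 0 := by
            rcases hε1 s with h | h <;> rw [h] <;> simp
          exact mul_ne_zero hcs hεne
        have hQinj : ∀ s₁ ∈ Q, ∀ s₂ ∈ Q, mvI s₁ = mvI s₂ → s₁ = s₂ := by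
          intro s₁ h₁ s₂ h₂ hmv
          obtain ⟨-, hc₁⟩ := hQprop s₁ h₁
          obtain ⟨-, hc₂⟩ := hQprop s₂ h₂
          rw [hmvI] at hmv
          simp only [dif_pos hc₁, dif_pos hc₂] at hmv
          exact Subtype.ext (moveS_inj hc₁.1 hc₁.2 hc₂.1 hc₂.2 (Subtype.ext_iff.mp hmv))
        set c'' : {s : Finset (Fin n) // s.card = k} → F :=
          fun t' => ∑ s' ∈ Q.filter (fun s' => mvI s' = t'), d s' with hc''
        have hrepr : (∑ s', d s' • wedge b (mvI s')) = ∑ t', c'' t' • wedge b t' := by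
          have hstep : ∀ t', c'' t' • wedge b t' =
              ∑ s' ∈ Q.filter (fun s' => mvI s' = t'), d s' • wedge b (mvI s') := by
            intro t'
            rw [hc'', Finset.sum_smul]
            refine Finset.sum_congr rfl (fun s' hs' => ?_)
            rw [(Finset.mem_filter.mp hs').2]
          rw [Finset.sum_congr rfl (fun t' _ => hstep t')]
          rw [Finset.sum_fiberwise_of_maps_to (fun x _ => Finset.mem_univ (mvI x))]
          symm
          refine Finset.sum_subset (Finset.filter_subset _ _) (fun x _ hx => ?_)
          have : d x = 0 := by
            by_contra h
            exact hx (Finset.mem_filter.mpr ⟨Finset.mem_univ _, h⟩)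
          rw [this, zero_smul]
        have hfiber : Q.filter (fun s' => mvI s' = mvI s) = {s} := by
          ext s₁
          simp only [Finset.mem_filter, Finset.mem_singleton]
          constructor
          · rintro ⟨h₁, h₂⟩
            exact hQinj s₁ h₁ s hsQ h₂
          · rintro rfl
            exact ⟨hsQ, rfl⟩
        have hc''s : c'' (mvI s) ≠ 0 := by
          show (∑ s' ∈ Q.filter (fun s' => mvI s' = mvI s), d s') ≠ 0
          rw [hfiber, Finset.sum_singleton]
          exact (Finset.mem_filter.mp hsQ).2
        have hne : (∑ t', c'' t' • wedge b t') ≠ 0 := by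
          intro h0
          exact hc''s (Fintype.linearIndependent_iff.mp (linearIndependent_wedge b) c'' h0 (mvI s))
        have hcard'' : (Finset.univ.filter (fun t' => c'' t' ≠ 0)).card ≤ N := by
          have hsub : Finset.univ.filter (fun t' => c'' t' ≠ 0) ⊆ Q.image mvI := by
            intro t' ht'
            have hne' : c'' t' ≠ 0 := (Finset.mem_filter.mp ht').2
            have hfib : (Q.filter (fun s' => mvI s' = t')).Nonempty := by
              by_contra h
              rw [Finset.not_nonempty_iff_eq_empty] at h
              apply hne'
              show (∑ s' ∈ Q.filter (fun s' => mvI s' = t'), d s') = 0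
              rw [h, Finset.sum_empty]
            obtain ⟨s', hs'⟩ := hfib
            exact Finset.mem_image.mpr ⟨s', (Finset.mem_filter.mp hs').1,
              (Finset.mem_filter.mp hs').2⟩
          have hQsub : Q ⊆ (Finset.univ.filter (fun s => c s ≠ 0)).erase t := by
            intro s' hs'
            obtain ⟨hc', hcond⟩ := hQprop s' hs'
            refine Finset.mem_erase.mpr ⟨?_, Finset.mem_filter.mpr ⟨Finset.mem_univ _, hc'⟩⟩
            intro h
            exact hcond.2 (h ▸ hjt)
          calc (Finset.univ.filter (fun t' => c'' t' ≠ 0)).card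
              ≤ (Q.image mvI).card := Finset.card_le_card hsub
            _ ≤ Q.card := Finset.card_image_le
            _ ≤ ((Finset.univ.filter (fun s => c s ≠ 0)).erase t).card :=
                Finset.card_le_card hQsub
            _ = N := by rw [Finset.card_erase_of_mem ht, hcard']; omega
        have hrepr' : (∑ t', c'' t' • wedge b t') ∈ U := by
          rw [← hrepr, ← hu'']
          exact hsubU
        refine ih c'' hrepr' ?_ hcard''
        exact hne
  -- Step 2: propagate to all wedge monomials using signed swaps.
  have step2 : ∀ m : ℕ, ∀ s t : {s : Finset (Fin n) // s.card = k},
      wedge b s ∈ U → (t.1 \ s.1).card ≤ m → wedge b t ∈ U := by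
    intro m
    induction m with
    | zero =>
      intro s t hsU hle
      have h0 : t.1 \ s.1 = ∅ := Finset.card_eq_zero.mp (Nat.le_zero.mp hle)
      have hts : t.1 ⊆ s.1 := by
        intro x hx
        by_contra hxs
        have : x ∈ t.1 \ s.1 := Finset.mem_sdiff.mpr ⟨hx, hxs⟩
        rw [h0] at this
        exact absurd this (Finset.notMem_empty _)
      have : t = s := Subtype.ext (Finset.eq_of_subset_of_card_le hts (by rw [s.2, t.2]))
      rw [this]
      exact hsU
    | succ m ih =>
      intro s t hsU hle
      by_cases h0 : (t.1 \ s.1).card = 0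
      · exact ih s t hsU (by omega)
      · obtain ⟨j, hj⟩ := Finset.card_pos.mp (Nat.pos_of_ne_zero h0)
        have hjt : j ∈ t.1 := (Finset.mem_sdiff.mp hj).1
        have hjs : j ∉ s.1 := (Finset.mem_sdiff.mp hj).2
        have hcards : (s.1 \ t.1).card = (t.1 \ s.1).card :=
          Finset.card_sdiff_comm (by rw [s.2, t.2])
        have hpos : 0 < (s.1 \ t.1).card := by omega
        obtain ⟨i, hi⟩ := Finset.card_pos.mp hpos
        have his : i ∈ s.1 := (Finset.mem_sdiff.mp hi).1
        have hit : i ∉ t.1 := (Finset.mem_sdiff.mp hi).2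
        have hij : i ≠ j := fun h => hjs (h ▸ his)
        obtain ⟨ε, hε, heq⟩ := map_sw_wedge b i j hij s his hjs
        have hmoveU : wedge b ⟨moveS i j s.1, moveS_card his hjs s.2⟩ ∈ U := by
          have hm := hinv (sw b i j hij) (sw_det b i j hij) _ hsU
          rw [heq] at hm
          have hεne : ε ≠ 0 := by rcases hε with h | h <;> rw [h] <;> simp
          have := Submodule.smul_mem U ε⁻¹ hm
          rwa [smul_smul, inv_mul_cancel₀ hεne, one_smul] at this
        have hsdiff : t.1 \ moveS i j s.1 = (t.1 \ s.1).erase j := by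
          ext x
          simp only [moveS, Finset.mem_sdiff, Finset.mem_insert, Finset.mem_erase,
            not_or, not_and]
          constructor
          · rintro ⟨hxt, hxj, hxe⟩
            refine ⟨hxj, hxt, ?_⟩
            intro hxs
            by_cases hxi : x = i
            · exact hit (hxi ▸ hxt)
            · exact (hxe hxi) hxs
          · rintro ⟨hxj, hxt, hxs⟩
            exact ⟨hxt, hxj, fun _ h => hxs h⟩
        have hle' : (t.1 \ moveS i j s.1).card ≤ m := by
          rw [hsdiff, Finset.card_erase_of_mem hj]
          omega
        exact ih ⟨moveS i j s.1, moveS_card his hjs s.2⟩ t hmoveU hle'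
  obtain ⟨s0, hs0⟩ := step1
  have hall : ∀ t, wedge b t ∈ U := fun t =>
    step2 (t.1 \ s0.1).card s0 t hs0 le_rfl
  refine le_antisymm hUle ?_
  rw [← hspan, Submodule.span_le]
  rintro _ ⟨t, rfl⟩
  exact hall t
end

section
/- Let V be a vector space of dimension 2n ≥ 4 over a field F with a nondegenerate symplectic or Hermitian form f of Witt index n, and let W ≤ V be a nondegenerate subspace of dimension 2n−2 and Witt index n−1. Then for every totally isotropic 1-dimensional subspace A and totally isotropic 3-dimensional subspace C with A ⊆ C, either exactly one or all of the totally isotropic 2-dimensional subspaces K with A ⊆ K ⊆ C satisfy K ∩ W ≠ {0}. -/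
open Module

/-- A subspace is totally isotropic for the form `f` if `f` vanishes on it. -/
def TotIso {F V : Type*} [Field F] [AddCommGroup V] [Module F V]
    (f : V → V → F) (U : Submodule F V) : Prop :=
  ∀ u ∈ U, ∀ v ∈ U, f u v = 0

/-- Let `V` be a `2n`-dimensional (`n ≥ 2`) space with a nondegenerate symplectic or
Hermitian form `f` of Witt index `n`, and let `W ≤ V` be a nondegenerate subspace of
dimension `2n − 2` and Witt index `n − 1`.  Then for every totally isotropic `1`-space
`A` and totally isotropic `3`-space `C` with `A ⊆ C`, either exactly one or all of the
totally isotropic `2`-spaces `K` with `A ⊆ K ⊆ C` meet `W` nontrivially. -/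
theorem grassmannian_line_meets_hyperplane
    {F V : Type*} [Field F] [AddCommGroup V] [Module F V] [FiniteDimensional F V]
    (n : ℕ) (hn : 2 ≤ n) (hdim : finrank F V = 2 * n)
    (σ : F ≃+* F) (hσ : ∀ c, σ (σ c) = c)
    (f : V → V → F)
    (hadd1 : ∀ x y z : V, f (x + y) z = f x z + f y z)
    (hsmul1 : ∀ (c : F) (x y : V), f (c • x) y = c * f x y)
    (hadd2 : ∀ x y z : V, f x (y + z) = f x y + f x z)
    (hsmul2 : ∀ (c : F) (x y : V), f x (c • y) = σ c * f x y)
    (hcase : ((∀ c, σ c = c) ∧ (∀ v : V, f v v = 0)) ∨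
      ((∃ c, σ c ≠ c) ∧ (∀ x y : V, f x y = σ (f y x))))
    (hnd : ∀ v : V, (∀ w : V, f v w = 0) → v = 0)
    (hWitt : (∃ U : Submodule F V, TotIso f U ∧ finrank F U = n) ∧
      (∀ U : Submodule F V, TotIso f U → finrank F U ≤ n))
    (W : Submodule F V) (hWdim : finrank F W = 2 * n - 2)
    (hWnd : ∀ v ∈ W, (∀ w ∈ W, f w v = 0) → v = 0)
    (hWWitt : (∃ U : Submodule F V, U ≤ W ∧ TotIso f U ∧ finrank F U = n - 1) ∧
      (∀ U : Submodule F V, U ≤ W → TotIso f U → finrank F U ≤ n - 1))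
    (A C : Submodule F V) (hA : TotIso f A) (hAdim : finrank F A = 1)
    (hC : TotIso f C) (hCdim : finrank F C = 3) (hAC : A ≤ C) :
    (∃! K : Submodule F V,
        (TotIso f K ∧ finrank F K = 2 ∧ A ≤ K ∧ K ≤ C) ∧ K ⊓ W ≠ ⊥) ∨
    (∀ K : Submodule F V,
        TotIso f K → finrank F K = 2 → A ≤ K → K ≤ C → K ⊓ W ≠ ⊥) := by
  classical
  set D := C ⊓ W with hDdef
  have hsumCW : finrank F ↥(C ⊔ W) + finrank F ↥D =
      finrank F C + finrank F W := Submodule.finrank_sup_add_finrank_inf_eq C W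
  have hle : finrank F ↥(C ⊔ W) ≤ 2 * n := by
    rw [← hdim]; exact Submodule.finrank_le _
  have hDpos : 1 ≤ finrank F ↥D := by omega
  -- a K ≤ C meets W iff it meets D
  have hmeet : ∀ K : Submodule F V, K ≤ C → K ⊓ D = K ⊓ W := by
    intro K hKC
    rw [hDdef, ← inf_assoc, inf_eq_left.mpr hKC]
  by_cases hD2 : 2 ≤ finrank F ↥D
  · right
    intro K _ hK2 _ hKC hbot
    have hsup : finrank F ↥(K ⊔ D) ≤ 3 := by
      rw [← hCdim]
      exact Submodule.finrank_mono (sup_le hKC inf_le_left)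
    have hsum : finrank F ↥(K ⊔ D) + finrank F ↥(K ⊓ D) =
        finrank F K + finrank F ↥D := Submodule.finrank_sup_add_finrank_inf_eq K D
    have : K ⊓ D = ⊥ := by rw [hmeet K hKC, hbot]
    rw [this, finrank_bot] at hsum
    omega
  · have hD1 : finrank F ↥D = 1 := by omega
    by_cases hAW : A ≤ W
    · right
      intro K _ _ hAK _ hbot
      have : A = ⊥ := le_bot_iff.mp (hbot ▸ le_inf hAK hAW)
      rw [this, finrank_bot] at hAdim
      omega
    · left
      have hAD : A ⊓ W = ⊥ := by
        by_contra h
        have h1 : 1 ≤ finrank F ↥(A ⊓ W) := by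
          rcases Nat.eq_zero_or_pos (finrank F ↥(A ⊓ W)) with h0 | h0
          · exact absurd (Submodule.finrank_eq_zero.mp h0) h
          · exact h0
        have h2 : finrank F ↥(A ⊓ W) ≤ 1 := hAdim ▸ Submodule.finrank_mono inf_le_left
        have : A ⊓ W = A :=
          Submodule.eq_of_le_of_finrank_eq inf_le_left (by omega)
        exact hAW (this ▸ inf_le_right)
      have hADbot : A ⊓ D = ⊥ := le_bot_iff.mp (hAD ▸ inf_le_inf_left A inf_le_right)
      have hsumAD : finrank F ↥(A ⊔ D) + finrank F ↥(A ⊓ D) =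
          finrank F A + finrank F ↥D := Submodule.finrank_sup_add_finrank_inf_eq A D
      rw [hADbot, finrank_bot] at hsumAD
      have hKdim : finrank F ↥(A ⊔ D) = 2 := by omega
      have hDC : D ≤ C := inf_le_left
      have hKC : A ⊔ D ≤ C := sup_le hAC hDC
      refine ⟨A ⊔ D, ⟨⟨fun u hu v hv => hC u (hKC hu) v (hKC hv), hKdim, le_sup_left, hKC⟩, ?_⟩, ?_⟩
      · intro hbot
        have : D = ⊥ := le_bot_iff.mp (hbot ▸ le_inf le_sup_right inf_le_right)
        rw [this, finrank_bot] at hD1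
        omega
      · rintro K ⟨⟨_, hK2, hAK, hKC'⟩, hne⟩
        have hKD : K ⊓ D ≠ ⊥ := by rw [hmeet K hKC']; exact hne
        have h1 : 1 ≤ finrank F ↥(K ⊓ D) := by
          rcases Nat.eq_zero_or_pos (finrank F ↥(K ⊓ D)) with h0 | h0
          · exact absurd (Submodule.finrank_eq_zero.mp h0) hKD
          · exact h0
        have h2 : finrank F ↥(K ⊓ D) ≤ 1 := hD1 ▸ Submodule.finrank_mono inf_le_right
        have hKDeq : K ⊓ D = D :=
          Submodule.eq_of_le_of_finrank_eq inf_le_right (by omega)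
        have hDK : D ≤ K := hKDeq ▸ inf_le_left
        exact (Submodule.eq_of_le_of_finrank_eq (sup_le hAK hDK) (by omega)).symm
end

section
/- Let V be a 4-dimensional vector space over F with a nondegenerate σ-Hermitian form h and hyperbolic basis e_1, e_2, e_3, e_4 (h(e_i, e_j) = 0 unless {i,j} = {1,3} or {2,4}, where it is 1). For scalars a, b ∈ F \ {0} and c in the fixed field of σ, and ε ∈ F with σ(ε) = −ε, the vectors D_a = e_1 + a·e_2 + c·ε·e_3 − (c·ε/σ(a))·e_4 and D_b (defined analogously) satisfy h(D_a, D_b) = c·ε·(a/b − σ(b)/σ(a)). In particular h(D_a, D_b) = 0 if and only if c·ε = 0 or a·σ(a) = b·σ(b). -/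
/-- In a `4`-dimensional nondegenerate `σ`-Hermitian space with hyperbolic basis
`e_1, e_2, e_3, e_4`, for nonzero `a, b`, `c` fixed by `σ` and `ε` with `σ ε = −ε`, the
vectors `D_a = e_1 + a e_2 + cε e_3 − (cε/σ a) e_4` and `D_b` (defined analogously)
satisfy `h(D_a, D_b) = cε (a/b − σ b/σ a)`; in particular `h(D_a, D_b) = 0` iff
`cε = 0` or `a σ a = b σ b`. -/
theorem hermitian_Da_Db_inner
    {F V : Type*} [Field F] [AddCommGroup V] [Module F V]
    (σ : F ≃+* F) (hσ : ∀ x, σ (σ x) = x) (hσne : ∃ x, σ x ≠ x)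
    (h : V → V → F)
    (hadd1 : ∀ x y z : V, h (x + y) z = h x z + h y z)
    (hsmul1 : ∀ (t : F) (x y : V), h (t • x) y = t * h x y)
    (hadd2 : ∀ x y z : V, h x (y + z) = h x y + h x z)
    (hsmul2 : ∀ (t : F) (x y : V), h x (t • y) = σ t * h x y)
    (hherm : ∀ x y : V, h x y = σ (h y x))
    (hnd : ∀ v : V, (∀ w : V, h v w = 0) → v = 0)
    (e : Module.Basis (Fin 4) F V)
    (hgram : ∀ i j : Fin 4, h (e i) (e j) =
      if ({i, j} : Finset (Fin 4)) = {0, 2} ∨ ({i, j} : Finset (Fin 4)) = {1, 3}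
      then 1 else 0)
    (a b c ε : F) (ha : a ≠ 0) (hb : b ≠ 0) (hc : σ c = c) (hε : σ ε = -ε)
    (Da Db : V)
    (hDa : Da = e 0 + a • e 1 + (c * ε) • e 2 - (c * ε / σ a) • e 3)
    (hDb : Db = e 0 + b • e 1 + (c * ε) • e 2 - (c * ε / σ b) • e 3) :
    h Da Db = c * ε * (a / b - σ b / σ a) ∧
      (h Da Db = 0 ↔ c * ε = 0 ∨ a * σ a = b * σ b) := by
  have hsa : σ a ≠ 0 := fun hh => ha (by simpa [hh] using (hσ a).symm)
  have hsb : σ b ≠ 0 := fun hh => hb (by simpa [hh] using (hσ b).symm)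
  have key : h Da Db = c * ε * (a / b - σ b / σ a) := by
    rw [hDa, hDb]
    simp only [sub_eq_add_neg, ← neg_smul, hadd1, hadd2, hsmul1, hsmul2, hgram]
    simp (config := { decide := true }) only [if_true, if_false]
    rw [map_neg, map_div₀, map_mul, hc, hε, hσ]
    field_simp
    ring
  refine ⟨key, ?_⟩
  rw [key]
  rw [mul_eq_zero]
  constructor
  · rintro (h1 | h1)
    · exact Or.inl h1
    · right
      have h2 : a / b = σ b / σ a := sub_eq_zero.mp h1
      field_simp at h2
      linear_combination h2
  · rintro (h1 | h1)
    · exact Or.inl h1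
    · right
      rw [sub_eq_zero]
      field_simp
      linear_combination h1
end

section
/- Let V be a 2n-dimensional vector space over F with a nondegenerate symplectic form f (char F ≠ 2), n ≥ 2. For totally isotropic 2-dimensional subspaces x ≠ y of V, exactly one of the following holds: (1) dim(x ∩ y) = 1 and span(x, y) is totally isotropic; (2) x ∩ y = 0 and span(x, y) is totally isotropic; (3) dim(x ∩ y) = 1 and span(x,y) is not totally isotropic; (4) x ∩ y = 0 and dim(rad(span(x,y))) = 2; (5) x ∩ y = 0 and span(x, y) is nondegenerate. -/
open Module LinearMap

lemma my_orthogonal_sup {F V : Type*} [Field F] [AddCommGroup V] [Module F V]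
    (B : LinearMap.BilinForm F V) (U W : Submodule F V) :
    B.orthogonal (U ⊔ W) = B.orthogonal U ⊓ B.orthogonal W := by
  refine le_antisymm (le_inf (B.orthogonal_le le_sup_left) (B.orthogonal_le le_sup_right)) ?_
  rintro m ⟨hmU, hmW⟩
  rw [LinearMap.BilinForm.mem_orthogonal_iff]
  intro n hn
  have : U ⊔ W ≤ LinearMap.ker (B.flip m) := by
    refine sup_le ?_ ?_ <;> intro k hk <;> simp only [LinearMap.mem_ker, LinearMap.flip_apply]
    · exact hmU k hk
    · exact hmW k hk
  exact this hn

lemma my_rad_decomp {F V : Type*} [Field F] [AddCommGroup V] [Module F V]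
    (B : LinearMap.BilinForm F V) (x y : Submodule F V)
    (hx : x ≤ B.orthogonal x) (hy : y ≤ B.orthogonal y) :
    (x ⊔ y) ⊓ B.orthogonal (x ⊔ y) = (x ⊓ B.orthogonal y) ⊔ (y ⊓ B.orthogonal x) := by
  apply le_antisymm
  · rintro w ⟨hw1, hw2⟩
    rw [my_orthogonal_sup] at hw2
    obtain ⟨hwx, hwy⟩ := hw2
    obtain ⟨u, hu, v, hv, rfl⟩ := Submodule.mem_sup.mp hw1
    refine Submodule.add_mem_sup ⟨hu, ?_⟩ ⟨hv, ?_⟩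
    · show u ∈ B.orthogonal y
      rw [LinearMap.BilinForm.mem_orthogonal_iff]
      intro n hn
      have h1 : B n (u + v) = 0 := hwy n hn
      have h2 : B n v = 0 := hy hv n hn
      have : B n u + B n v = 0 := by rw [← map_add]; exact h1
      simpa [h2] using this
    · show v ∈ B.orthogonal x
      rw [LinearMap.BilinForm.mem_orthogonal_iff]
      intro n hn
      have h1 : B n (u + v) = 0 := hwx n hn
      have h2 : B n u = 0 := hx hu n hn
      have : B n u + B n v = 0 := by rw [← map_add]; exact h1
      simpa [h2] using this
  · refine sup_le ?_ ?_
    · rintro u ⟨hu, huo⟩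
      refine ⟨Submodule.mem_sup_left hu, ?_⟩
      rw [my_orthogonal_sup]
      exact ⟨hx hu, huo⟩
    · rintro v ⟨hv, hvo⟩
      refine ⟨Submodule.mem_sup_right hv, ?_⟩
      rw [my_orthogonal_sup]
      exact ⟨hvo, hy hv⟩

lemma my_dim_symm {F V : Type*} [Field F] [AddCommGroup V] [Module F V] [FiniteDimensional F V]
    (B : LinearMap.BilinForm F V) (hnd : B.Nondegenerate) (hrefl : B.IsRefl)
    (x y : Submodule F V) (h : finrank F x = finrank F y) :
    finrank F ↥(x ⊓ B.orthogonal y) = finrank F ↥(y ⊓ B.orthogonal x) := by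
  have e1 : x ⊓ B.orthogonal y = B.orthogonal (B.orthogonal x ⊔ y) := by
    rw [my_orthogonal_sup, B.orthogonal_orthogonal hnd hrefl]
  have e2 : y ⊓ B.orthogonal x = B.orthogonal (B.orthogonal y ⊔ x) := by
    rw [my_orthogonal_sup, B.orthogonal_orthogonal hnd hrefl]
  have s1 := Submodule.finrank_sup_add_finrank_inf_eq (B.orthogonal x) y
  have s2 := Submodule.finrank_sup_add_finrank_inf_eq (B.orthogonal y) x
  have o1 : finrank F (B.orthogonal x) = finrank F V - finrank F x :=
    LinearMap.BilinForm.finrank_orthogonal hnd x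
  have o2 : finrank F (B.orthogonal y) = finrank F V - finrank F y :=
    LinearMap.BilinForm.finrank_orthogonal hnd y
  have i1 : finrank F ↥(B.orthogonal x ⊓ y)
      = finrank F V - finrank F ↥(B.orthogonal y ⊔ x) := by
    rw [inf_comm, e2, LinearMap.BilinForm.finrank_orthogonal hnd]
  have i2 : finrank F ↥(B.orthogonal y ⊓ x)
      = finrank F V - finrank F ↥(B.orthogonal x ⊔ y) := by
    rw [inf_comm, e1, LinearMap.BilinForm.finrank_orthogonal hnd]
  rw [e1, e2, LinearMap.BilinForm.finrank_orthogonal hnd,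
    LinearMap.BilinForm.finrank_orthogonal hnd]
  have b1 : finrank F ↥(B.orthogonal x ⊔ y) ≤ finrank F V := Submodule.finrank_le _
  have b2 : finrank F ↥(B.orthogonal y ⊔ x) ≤ finrank F V := Submodule.finrank_le _
  have b3 : finrank F x ≤ finrank F V := Submodule.finrank_le _
  have b4 : finrank F y ≤ finrank F V := Submodule.finrank_le _
  omega

/-- Classification of pairs of distinct totally isotropic `2`-spaces `x ≠ y` in a
nondegenerate symplectic space of dimension `2n` (`n ≥ 2`, `char F ≠ 2`): exactly one
of the five listed mutual positions holds. -/
theorem ti_two_spaces_five_relations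
    {F V : Type*} [Field F] [AddCommGroup V] [Module F V] [FiniteDimensional F V]
    (hchar : (2 : F) ≠ 0)
    (n : ℕ) (hn : 2 ≤ n) (hdim : finrank F V = 2 * n)
    (B : LinearMap.BilinForm F V) (halt : B.IsAlt) (hnd : B.Nondegenerate)
    (x y : Submodule F V)
    (hx : x ≤ B.orthogonal x) (hy : y ≤ B.orthogonal y)
    (hxdim : finrank F x = 2) (hydim : finrank F y = 2) (hxy : x ≠ y) :
    ∃! i : Fin 5,
      ![finrank F ↥(x ⊓ y) = 1 ∧ (x ⊔ y) ≤ B.orthogonal (x ⊔ y),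
        x ⊓ y = ⊥ ∧ (x ⊔ y) ≤ B.orthogonal (x ⊔ y),
        finrank F ↥(x ⊓ y) = 1 ∧ ¬ (x ⊔ y) ≤ B.orthogonal (x ⊔ y),
        x ⊓ y = ⊥ ∧ finrank F ↥((x ⊔ y) ⊓ B.orthogonal (x ⊔ y)) = 2,
        x ⊓ y = ⊥ ∧ (x ⊔ y) ⊓ B.orthogonal (x ⊔ y) = ⊥] i := by
  have hrefl : B.IsRefl := halt.isRefl
  have hN : 4 ≤ finrank F V := by omega
  have hinfle : finrank F ↥(x ⊓ y) ≤ 2 := hxdim ▸ Submodule.finrank_mono inf_le_left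
  have hinfne2 : finrank F ↥(x ⊓ y) ≠ 2 := by
    intro h2
    have h1 : x ⊓ y = x := Submodule.eq_of_le_of_finrank_le inf_le_left (by omega)
    have h2' : x ⊓ y = y := Submodule.eq_of_le_of_finrank_le inf_le_right (by omega)
    exact hxy (h1 ▸ h2')
  by_cases hb : x ⊓ y = ⊥
  · -- trivial intersection branch
    have hz : finrank F ↥(x ⊓ y) = 0 := by rw [hb]; exact finrank_bot F V
    have hW : finrank F ↥(x ⊔ y) = 4 := by
      have := Submodule.finrank_sup_add_finrank_inf_eq x y
      omega
    have hab : finrank F ↥(x ⊓ B.orthogonal y) = finrank F ↥(y ⊓ B.orthogonal x) :=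
      my_dim_symm B hnd hrefl x y (hxdim.trans hydim.symm)
    have hRdec : (x ⊔ y) ⊓ B.orthogonal (x ⊔ y)
        = (x ⊓ B.orthogonal y) ⊔ (y ⊓ B.orthogonal x) := my_rad_decomp B x y hx hy
    have hdisj : (x ⊓ B.orthogonal y) ⊓ (y ⊓ B.orthogonal x) = ⊥ := by
      rw [eq_bot_iff, ← hb]
      exact le_inf (le_trans inf_le_left inf_le_left) (le_trans inf_le_right inf_le_left)
    have hRdim : finrank F ↥((x ⊔ y) ⊓ B.orthogonal (x ⊔ y))
        = 2 * finrank F ↥(x ⊓ B.orthogonal y) := by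
      rw [hRdec]
      have := Submodule.finrank_sup_add_finrank_inf_eq (x ⊓ B.orthogonal y) (y ⊓ B.orthogonal x)
      rw [hdisj, finrank_bot] at this
      omega
    have ha2 : finrank F ↥(x ⊓ B.orthogonal y) ≤ 2 :=
      hxdim ▸ Submodule.finrank_mono inf_le_left
    have htri : finrank F ↥(x ⊓ B.orthogonal y) = 0
        ∨ finrank F ↥(x ⊓ B.orthogonal y) = 1
        ∨ finrank F ↥(x ⊓ B.orthogonal y) = 2 := by omega
    rcases htri with ha | ha | ha
    · -- a = 0 : radical is trivial, case 4
      have hR0 : (x ⊔ y) ⊓ B.orthogonal (x ⊔ y) = ⊥ := by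
        have ha' : finrank F ↥(y ⊓ B.orthogonal x) = 0 := by omega
        rw [hRdec, Submodule.finrank_eq_zero.mp ha,
          Submodule.finrank_eq_zero.mp ha', sup_bot_eq]
      refine ⟨4, ⟨hb, hR0⟩, ?_⟩
      intro j hj
      fin_cases j
      · exact absurd hj.1 (by omega)
      · exfalso
        obtain ⟨h1', h2'⟩ := hj
        have hbot : (x ⊔ y : Submodule F V) = ⊥ := by rw [← hR0, inf_eq_left.mpr h2']
        rw [hbot, finrank_bot] at hW
        omega
      · exact absurd hj.1 (by omega)
      · exfalso
        obtain ⟨h1', h2'⟩ := hj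
        rw [hR0, finrank_bot] at h2'
        omega
      · rfl
    · -- a = 1 : radical has dimension 2, case 3
      have hR2 : finrank F ↥((x ⊔ y) ⊓ B.orthogonal (x ⊔ y)) = 2 := by omega
      refine ⟨3, ⟨hb, hR2⟩, ?_⟩
      intro j hj
      fin_cases j
      · exact absurd hj.1 (by omega)
      · exfalso
        obtain ⟨h1', h2'⟩ := hj
        rw [inf_eq_left.mpr h2', hW] at hR2
        omega
      · exact absurd hj.1 (by omega)
      · rfl
      · exfalso
        obtain ⟨h1', h2'⟩ := hj
        rw [h2', finrank_bot] at hR2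
        omega
    · -- a = 2 : x ≤ y^⊥, the sup is totally isotropic, case 1
      have hxOy : x ⊓ B.orthogonal y = x :=
        Submodule.eq_of_le_of_finrank_le inf_le_left (by omega)
      have hxley : x ≤ B.orthogonal y := hxOy ▸ inf_le_right
      have hylex : y ≤ B.orthogonal x :=
        le_trans (B.le_orthogonal_orthogonal hrefl) (B.orthogonal_le hxley)
      have hti : (x ⊔ y) ≤ B.orthogonal (x ⊔ y) := by
        rw [my_orthogonal_sup]
        exact sup_le (le_inf hx hxley) (le_inf hylex hy)
      have hReq : (x ⊔ y) ⊓ B.orthogonal (x ⊔ y) = x ⊔ y := inf_eq_left.mpr hti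
      refine ⟨1, ⟨hb, hti⟩, ?_⟩
      intro j hj
      fin_cases j
      · exact absurd hj.1 (by omega)
      · rfl
      · exact absurd hj.1 (by omega)
      · exfalso
        obtain ⟨h1', h2'⟩ := hj
        rw [hReq, hW] at h2'
        omega
      · exfalso
        obtain ⟨h1', h2'⟩ := hj
        rw [hReq] at h2'
        rw [h2', finrank_bot] at hW
        omega
  · -- dim (x ⊓ y) = 1 branch
    have h1 : finrank F ↥(x ⊓ y) = 1 := by
      have h0 : finrank F ↥(x ⊓ y) ≠ 0 := fun h => hb (Submodule.finrank_eq_zero.mp h)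
      omega
    by_cases hti : (x ⊔ y) ≤ B.orthogonal (x ⊔ y)
    · refine ⟨0, ⟨h1, hti⟩, ?_⟩
      intro j hj
      fin_cases j
      · rfl
      · exact absurd hj.1 hb
      · exact absurd hti hj.2
      · exact absurd hj.1 hb
      · exact absurd hj.1 hb
    · refine ⟨2, ⟨h1, hti⟩, ?_⟩
      intro j hj
      fin_cases j
      · exact absurd hj.2 hti
      · exact absurd hj.1 hb
      · rfl
      · exact absurd hj.1 hb
      · exact absurd hj.1 hb
end
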